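/- Let φ be an LTL_P formula, α a formula with ◇_F α ∈ sub(φ), and M′ an ℕ-model over Σ_φ satisfying, for all ℓ ∈ ℕ: (a) M′,(ℓ+1) ⊨ A₋^{◇_Fα} iff (M′,ℓ ⊨ A₋^{◇_Fα} or M′,(ℓ+1) ⊨ ᾱ₋), and (b) M′,ℓ ⊨ A₊^{◇_Fα} iff there exists m ≥ ℓ with M′,m ⊨ ᾱ₊; and satisfying at time 0: M′,0 ⊨ A₊^{◇_Fα} iff M′,0 ⊨ A₋^{◇_Fα}, and M′,0 ⊨ ᾱ₊ iff M′,0 ⊨ ᾱ₋. Let M be a ℤ-model such that for all m ∈ ℤ: M,m ⊨ α iff (M′,m ⊨ ᾱ₊ when m ≥ 0, and M′,−m ⊨ ᾱ₋ when m < 0). Then for all n ∈ ℤ: M,n ⊨ ◇_F α iff (M′,n ⊨ A₊^{◇_Fα} when n ≥ 0, and M′,−n ⊨ A₋^{◇_Fα} when n < 0). -/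

import Mathlib

/-- LTL_P formulas over propositional variables `V`:
`p | ¬φ | φ₁ ∧ φ₂ | ◯_F φ | ◯_P φ | ◇_F φ | ◇_P φ`. -/
inductive LTLP (V : Type) : Type
  | var   : V → LTLP V
  | neg   : LTLP V → LTLP V
  | conj  : LTLP V → LTLP V → LTLP V
  | nextF : LTLP V → LTLP V
  | nextP : LTLP V → LTLP V
  | diaF  : LTLP V → LTLP V
  | diaP  : LTLP V → LTLP V
  deriving DecidableEq

/-- Satisfaction `M,n ⊨ φ` of an LTL_P formula in a ℤ-model `M : ℤ → V → Prop`. -/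
def ZSat {V : Type} (M : ℤ → V → Prop) : ℤ → LTLP V → Prop
  | n, .var p    => M n p
  | n, .neg ψ    => ¬ ZSat M n ψ
  | n, .conj ψ χ => ZSat M n ψ ∧ ZSat M n χ
  | n, .nextF ψ  => ZSat M (n + 1) ψ
  | n, .nextP ψ  => ZSat M (n - 1) ψ
  | n, .diaF ψ   => ∃ m, n ≤ m ∧ ZSat M m ψ
  | n, .diaP ψ   => ∃ m, m ≤ n ∧ ZSat M m ψ

/-- Pure-future LTL formulas (no past operators). -/
inductive LTLF (W : Type) : Type
  | var   : W → LTLF W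
  | neg   : LTLF W → LTLF W
  | conj  : LTLF W → LTLF W → LTLF W
  | nextF : LTLF W → LTLF W
  | diaF  : LTLF W → LTLF W
  deriving DecidableEq

/-- Satisfaction `N,n ⊨ φ` of a pure-future formula in an ℕ-model `N : ℕ → W → Prop`. -/
def NSat {W : Type} (N : ℕ → W → Prop) : ℕ → LTLF W → Prop
  | n, .var p    => N n p
  | n, .neg ψ    => ¬ NSat N n ψ
  | n, .conj ψ χ => NSat N n ψ ∧ NSat N n χ
  | n, .nextF ψ  => NSat N (n + 1) ψ
  | n, .diaF ψ   => ∃ m, n ≤ m ∧ NSat N m ψ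

/-- The extended alphabet Σ_φ: variables `p₊`, `p₋` for propositional variables `p`,
and `A₊^{Oψ}`, `A₋^{Oψ}` indexed by (temporal) formulas `Oψ`. -/
inductive Alph (V : Type) : Type
  | pos  : V → Alph V
  | negv : V → Alph V
  | Apos : LTLP V → Alph V
  | Aneg : LTLP V → Alph V
  deriving DecidableEq

/-- `ξ.isTemporal` holds iff the outermost symbol of `ξ` is a temporal operator. -/
def LTLP.isTemporal {V : Type} : LTLP V → Prop
  | .nextF _ => True
  | .nextP _ => True
  | .diaF _  => True
  | .diaP _  => True
  | _        => False

/-- The translation `ξ̄_∗` (`s = true` for `∗ = +`, `s = false` for `∗ = −`):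
a propositional formula over `Alph V`. -/
def bar {V : Type} (s : Bool) : LTLP V → LTLF (Alph V)
  | .var p    => .var (if s then .pos p else .negv p)
  | .neg ψ    => .neg (bar s ψ)
  | .conj ψ χ => .conj (bar s ψ) (bar s χ)
  | .nextF ψ  => .var (if s then .Apos (.nextF ψ) else .Aneg (.nextF ψ))
  | .nextP ψ  => .var (if s then .Apos (.nextP ψ) else .Aneg (.nextP ψ))
  | .diaF ψ   => .var (if s then .Apos (.diaF ψ) else .Aneg (.diaF ψ))
  | .diaP ψ   => .var (if s then .Apos (.diaP ψ) else .Aneg (.diaP ψ))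

/-- The set `sub φ` of subformulas of `φ`. -/
def subFmls {V : Type} : LTLP V → Set (LTLP V)
  | .var p    => {LTLP.var p}
  | .neg ψ    => insert (.neg ψ) (subFmls ψ)
  | .conj ψ χ => insert (.conj ψ χ) (subFmls ψ ∪ subFmls χ)
  | .nextF ψ  => insert (.nextF ψ) (subFmls ψ)
  | .nextP ψ  => insert (.nextP ψ) (subFmls ψ)
  | .diaF ψ   => insert (.diaF ψ) (subFmls ψ)
  | .diaP ψ   => insert (.diaP ψ) (subFmls ψ)

/-- The induced ℕ-model `M′` over `Alph V` of a ℤ-model `M`. -/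
def induced {V : Type} (M : ℤ → V → Prop) : ℕ → Alph V → Prop
  | n, .pos p  => M (n : ℤ) p
  | n, .negv p => M (-(n : ℤ)) p
  | n, .Apos ξ => ZSat M (n : ℤ) ξ
  | n, .Aneg ξ => ZSat M (-(n : ℤ)) ξ

/-- The conjunct of part (iii) of the pure-future translation associated with a temporal
subformula, evaluated at time `n` (trivial for non-temporal formulas). -/
def ClauseAt {V : Type} (N : ℕ → Alph V → Prop) (n : ℕ) : LTLP V → Prop
  | .nextF ψ =>
      (N (n + 1) (.Aneg (.nextF ψ)) ↔ NSat N n (bar false ψ)) ∧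
      (N n (.Apos (.nextF ψ)) ↔ NSat N (n + 1) (bar true ψ))
  | .nextP ψ =>
      (N (n + 1) (.Apos (.nextP ψ)) ↔ NSat N n (bar true ψ)) ∧
      (N n (.Aneg (.nextP ψ)) ↔ NSat N (n + 1) (bar false ψ))
  | .diaF ψ =>
      (N (n + 1) (.Aneg (.diaF ψ)) ↔ (N n (.Aneg (.diaF ψ)) ∨ NSat N (n + 1) (bar false ψ))) ∧
      (N n (.Apos (.diaF ψ)) ↔ ∃ m, n ≤ m ∧ NSat N m (bar true ψ))
  | .diaP ψ =>
      (N (n + 1) (.Apos (.diaP ψ)) ↔ (N n (.Apos (.diaP ψ)) ∨ NSat N (n + 1) (bar true ψ))) ∧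
      (N n (.Aneg (.diaP ψ)) ↔ ∃ m, n ≤ m ∧ NSat N m (bar false ψ))
  | _ => True

/-- `N,0 ⊨ φ^ℕ`: satisfaction at time 0 of the pure-future translation of `φ`, i.e. the
conjunction of (i) `φ̄₊`, (ii) `v₊ ↔ v₋` at time 0 for all variable pairs of Σ_φ, and
(iii) `□_F` of the clauses for all temporal subformulas of `φ` (so: the clauses hold at all
`n ∈ ℕ`). -/
def SatPF {V : Type} (N : ℕ → Alph V → Prop) (φ : LTLP V) : Prop :=
  NSat N 0 (bar true φ) ∧
  (∀ p : V, LTLP.var p ∈ subFmls φ → (N 0 (.pos p) ↔ N 0 (.negv p))) ∧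
  (∀ ξ ∈ subFmls φ, ξ.isTemporal → (N 0 (.Apos ξ) ↔ N 0 (.Aneg ξ))) ∧
  (∀ n : ℕ, ∀ ξ ∈ subFmls φ, ClauseAt N n ξ)

/-- correctness of the clauses for `◇_F α` in the backward direction. -/
theorem diaF_backward {V : Type} (φ α : LTLP V) (hsub : LTLP.diaF α ∈ subFmls φ)
    (N : ℕ → Alph V → Prop) (M : ℤ → V → Prop)
    (ha : ∀ l : ℕ, N (l + 1) (.Aneg (.diaF α)) ↔
      (N l (.Aneg (.diaF α)) ∨ NSat N (l + 1) (bar false α)))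
    (hb : ∀ l : ℕ, N l (.Apos (.diaF α)) ↔ ∃ m, l ≤ m ∧ NSat N m (bar true α))
    (h0A : N 0 (.Apos (.diaF α)) ↔ N 0 (.Aneg (.diaF α)))
    (h0a : NSat N 0 (bar true α) ↔ NSat N 0 (bar false α))
    (hM : ∀ m : ℤ, ZSat M m α ↔
      if 0 ≤ m then NSat N m.toNat (bar true α) else NSat N (-m).toNat (bar false α)) :
    ∀ n : ℤ, ZSat M n (.diaF α) ↔
      if 0 ≤ n then N n.toNat (.Apos (.diaF α)) else N (-n).toNat (.Aneg (.diaF α)) := by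
  have hneg : ∀ k : ℕ, N k (.Aneg (.diaF α)) ↔
      (N 0 (.Aneg (.diaF α)) ∨ ∃ j, 1 ≤ j ∧ j ≤ k ∧ NSat N j (bar false α)) := by
    intro k
    induction k with
    | zero => simp
    | succ k ih =>
      rw [ha k, ih]
      constructor
      · rintro ((h | ⟨j, h1, h2, h3⟩) | h)
        · exact Or.inl h
        · exact Or.inr ⟨j, h1, h2.trans (Nat.le_succ k), h3⟩
        · exact Or.inr ⟨k + 1, Nat.succ_le_succ (Nat.zero_le k), le_refl _, h⟩
      · rintro (h | ⟨j, h1, h2, h3⟩)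
        · exact Or.inl (Or.inl h)
        · rcases Nat.lt_or_ge j (k + 1) with hj | hj
          · exact Or.inl (Or.inr ⟨j, h1, Nat.lt_succ_iff.mp hj, h3⟩)
          · have hje : j = k + 1 := le_antisymm h2 hj
            subst hje; exact Or.inr h3
  intro n
  simp only [ZSat]
  by_cases hn : 0 ≤ n
  · rw [if_pos hn, hb]
    constructor
    · rintro ⟨m, hm, hα⟩
      have hm0 : 0 ≤ m := hn.trans hm
      refine ⟨m.toNat, by omega, ?_⟩
      have := (hM m).mp hα; rwa [if_pos hm0] at this
    · rintro ⟨m, hm, hα⟩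
      refine ⟨(m : ℤ), by omega, ?_⟩
      rw [hM, if_pos (by positivity)]
      simpa using hα
  · rw [if_neg hn]
    push_neg at hn
    rw [hneg, ← h0A, hb 0]
    constructor
    · rintro ⟨m, hm, hα⟩
      by_cases hm0 : 0 ≤ m
      · left
        refine ⟨m.toNat, Nat.zero_le _, ?_⟩
        have := (hM m).mp hα; rwa [if_pos hm0] at this
      · right
        push_neg at hm0
        refine ⟨(-m).toNat, by omega, by omega, ?_⟩
        have := (hM m).mp hα; rwa [if_neg (by omega)] at this
    · rintro (⟨m, _, hα⟩ | ⟨j, h1, h2, h3⟩)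
      · refine ⟨(m : ℤ), by omega, ?_⟩
        rw [hM, if_pos (by positivity)]
        simpa using hα
      · refine ⟨-(j : ℤ), by omega, ?_⟩
        rw [hM, if_neg (by omega)]
        simpa using h3
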